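/- arXiv:2109.02343 — 8 statements merged into one kernel-verified Lean document; each statement's English description precedes it below -/
import Mathlib

section
/- The relation ⪯_ι on r-multichains is antisymmetric: if 𝔭 ⪯_ι 𝔮 and 𝔮 ⪯_ι 𝔭 then 𝔭 = 𝔮. -/
/-- `p : ℕ → P` is an `r`-multichain: weakly increasing on indices `1,…,r`. -/
def IsMultichain {P : Type*} [PartialOrder P] (r : ℕ) (p : ℕ → P) : Prop :=
  ∀ i j, 1 ≤ i → i ≤ j → j ≤ r → p i ≤ p j

/-- `ι` is a strictly increasing map from `[r] = {1,…,r}` to `[2r]`. -/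
def StrictIncTo (r : ℕ) (ι : ℕ → ℕ) : Prop :=
  (∀ t, 1 ≤ t → t ≤ r → 1 ≤ ι t ∧ ι t ≤ 2 * r) ∧
  (∀ s t, 1 ≤ s → s < t → t ≤ r → ι s < ι t)

/-- The relation `𝔭 ⪯_ι 𝔮`: for all `t, s ∈ [r]`, `q s ≤ p t` if `s ≤ ι t − t`
(equivalently `s + t ≤ ι t`) and `p t ≤ q s` if `s > ι t − t`. -/
def MRel {P : Type*} [PartialOrder P] (r : ℕ) (ι : ℕ → ℕ) (p q : ℕ → P) : Prop :=
  ∀ t s, 1 ≤ t → t ≤ r → 1 ≤ s → s ≤ r →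
    (s + t ≤ ι t → q s ≤ p t) ∧ (ι t < s + t → p t ≤ q s)

/-- The relation ⪯_ι is antisymmetric. -/
theorem mrel_antisymm {P : Type*} [PartialOrder P] (r : ℕ) (hr : 1 ≤ r)
    (ι : ℕ → ℕ) (hι : StrictIncTo r ι)
    (p q : ℕ → P) (hp : IsMultichain r p) (hq : IsMultichain r q)
    (h1 : MRel r ι p q) (h2 : MRel r ι q p) :
    ∀ j, 1 ≤ j → j ≤ r → p j = q j := by
  intro j hj1 hjr
  obtain ⟨a1, a2⟩ := h1 j j hj1 hjr hj1 hjr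
  obtain ⟨b1, b2⟩ := h2 j j hj1 hjr hj1 hjr
  rcases le_or_gt (j + j) (ι j) with h | h
  · exact le_antisymm (b1 h) (a1 h)
  · exact le_antisymm (a2 h) (b2 h)
end

section
/- If r > 1, ι(j) = j for all j ∈ [r], and P contains two elements p < q, then the relation ⪯_ι is not reflexive: the r-multichain 𝔭 given by p_1 = ⋯ = p_{r−1} = p and p_r = q satisfies 𝔭 ⋠_ι 𝔭. -/
/-- For r > 1, ι = id and a chain p < q in P, the multichain
p ≤ ⋯ ≤ p ≤ q is not related to itself, so ⪯_ι is not reflexive. -/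
theorem id_not_reflexive {P : Type*} [PartialOrder P] (r : ℕ) (hr : 1 < r)
    (p q : P) (hpq : p < q) :
    ¬ MRel r (fun j => j)
        (fun i => if i < r then p else q) (fun i => if i < r then p else q) := by
  intro h
  have := (h r 1 (by omega) le_rfl le_rfl (by omega)).2 (by show r < 1 + r; omega)
  simp only [lt_irrefl, if_false, if_pos hr] at this
  exact absurd this hpq.not_ge
end

section
/- Duality: for all 𝔭, 𝔮 ∈ P_r, one has 𝔭 ⪯_ι 𝔮 if and only if 𝔮 ⪯_{ι*} 𝔭, where ι* : [r] → [2r] is the strictly increasing map whose image is the complement in [2r] of the image of ι. -/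
open scoped Classical


lemma strictIncTo_mono {r : ℕ} {ι : ℕ → ℕ} (hι : StrictIncTo r ι)
    {u v : ℕ} (h1 : 1 ≤ u) (huv : u ≤ v) (hvr : v ≤ r) : ι u ≤ ι v := by
  rcases eq_or_lt_of_le huv with h | h
  · rw [h]
  · exact le_of_lt (hι.2 u v h1 h hvr)

lemma countA {r : ℕ} {ι : ℕ → ℕ} (hι : StrictIncTo r ι) (m : ℕ)
    {t : ℕ} (ht1 : 1 ≤ t) (htr : t ≤ r) :
    ι t ≤ m ↔ t ≤ ((Finset.Icc 1 r).filter (fun u => ι u ≤ m)).card := by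
  constructor
  · intro h
    have hsub : Finset.Icc 1 t ⊆ (Finset.Icc 1 r).filter (fun u => ι u ≤ m) := by
      intro u hu
      simp only [Finset.mem_Icc] at hu
      simp only [Finset.mem_filter, Finset.mem_Icc]
      exact ⟨⟨hu.1, le_trans hu.2 htr⟩, le_trans (strictIncTo_mono hι hu.1 hu.2 htr) h⟩
    have := Finset.card_le_card hsub
    simpa using this
  · intro hcard
    by_contra hm
    push_neg at hm
    have hsub : (Finset.Icc 1 r).filter (fun u => ι u ≤ m) ⊆ Finset.Icc 1 (t - 1) := by
      intro u hu
      simp only [Finset.mem_filter, Finset.mem_Icc] at hu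
      simp only [Finset.mem_Icc]
      refine ⟨hu.1.1, ?_⟩
      by_contra hut
      push_neg at hut
      have : t ≤ u := by omega
      have := strictIncTo_mono hι ht1 this hu.1.2
      omega
    have := Finset.card_le_card hsub
    simp [Nat.card_Icc] at this
    omega

lemma cardAB {r : ℕ} {ι : ℕ → ℕ} (hι : StrictIncTo r ι) (m : ℕ) :
    ((Finset.Icc 1 r).filter (fun u => ι u ≤ m)).card =
    ((Finset.Icc 1 m).filter (fun v => ∃ u, 1 ≤ u ∧ u ≤ r ∧ ι u = v)).card := by
  classical
  apply Finset.card_bij (fun u _ => ι u)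
  · intro u hu
    simp only [Finset.mem_filter, Finset.mem_Icc] at hu ⊢
    exact ⟨⟨(hι.1 u hu.1.1 hu.1.2).1, hu.2⟩, u, hu.1.1, hu.1.2, rfl⟩
  · intro a ha b hb hab
    simp only [Finset.mem_filter, Finset.mem_Icc] at ha hb
    by_contra hne
    rcases lt_or_gt_of_ne hne with h | h
    · have := hι.2 a b ha.1.1 h hb.1.2; omega
    · have := hι.2 b a hb.1.1 h ha.1.2; omega
  · intro v hv
    simp only [Finset.mem_filter, Finset.mem_Icc] at hv
    obtain ⟨⟨hv1, hvm⟩, u, hu1, hur, huv⟩ := hv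
    refine ⟨u, ?_, huv⟩
    simp only [Finset.mem_filter, Finset.mem_Icc]
    exact ⟨⟨hu1, hur⟩, by omega⟩

lemma cardSum {r : ℕ} {ι ι' : ℕ → ℕ} (hι : StrictIncTo r ι) (hι' : StrictIncTo r ι')
    (hcomp : ∀ m, 1 ≤ m → m ≤ 2 * r →
      ((∃ t, 1 ≤ t ∧ t ≤ r ∧ ι t = m) ↔ ¬ ∃ t, 1 ≤ t ∧ t ≤ r ∧ ι' t = m))
    {m : ℕ} (hm : m ≤ 2 * r) :
    ((Finset.Icc 1 r).filter (fun u => ι u ≤ m)).card +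
    ((Finset.Icc 1 r).filter (fun u => ι' u ≤ m)).card = m := by
  classical
  rw [cardAB hι, cardAB hι']
  have h2 : ((Finset.Icc 1 m).filter (fun v => ∃ u, 1 ≤ u ∧ u ≤ r ∧ ι' u = v)) =
      ((Finset.Icc 1 m).filter (fun v => ¬ ∃ u, 1 ≤ u ∧ u ≤ r ∧ ι u = v)) := by
    apply Finset.filter_congr
    intro v hv
    simp only [Finset.mem_Icc] at hv
    have h := hcomp v hv.1 (le_trans hv.2 hm)
    constructor
    · intro h' hA
      exact h.mp hA h'
    · intro hA
      by_contra h'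
      exact hA (h.mpr h')
  rw [h2, Finset.card_filter_add_card_filter_not, Nat.card_Icc]
  omega

lemma key {r : ℕ} {ι ι' : ℕ → ℕ} (hι : StrictIncTo r ι) (hι' : StrictIncTo r ι')
    (hcomp : ∀ m, 1 ≤ m → m ≤ 2 * r →
      ((∃ t, 1 ≤ t ∧ t ≤ r ∧ ι t = m) ↔ ¬ ∃ t, 1 ≤ t ∧ t ≤ r ∧ ι' t = m))
    {s t : ℕ} (hs1 : 1 ≤ s) (hsr : s ≤ r) (ht1 : 1 ≤ t) (htr : t ≤ r) :
    s + t ≤ ι t ↔ ι' s < s + t := by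
  classical
  set m := s + t - 1 with hm
  have hm2r : m ≤ 2 * r := by omega
  have h1 := countA hι m ht1 htr
  have h2 := countA hι' m hs1 hsr
  have h3 := cardSum hι hι' hcomp hm2r
  omega

/-- Duality: 𝔭 ⪯_ι 𝔮 iff 𝔮 ⪯_{ι*} 𝔭, where ι* is the strictly increasing map
whose image is the complement in [2r] of the image of ι. -/
theorem mrel_duality {P : Type*} [PartialOrder P] (r : ℕ) (hr : 1 ≤ r)
    (ι ι' : ℕ → ℕ) (hι : StrictIncTo r ι) (hι' : StrictIncTo r ι')
    (hcomp : ∀ m, 1 ≤ m → m ≤ 2 * r →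
      ((∃ t, 1 ≤ t ∧ t ≤ r ∧ ι t = m) ↔ ¬ ∃ t, 1 ≤ t ∧ t ≤ r ∧ ι' t = m))
    (p q : ℕ → P) (hp : IsMultichain r p) (hq : IsMultichain r q) :
    MRel r ι p q ↔ MRel r ι' q p := by
  have hcomp' : ∀ m, 1 ≤ m → m ≤ 2 * r →
      ((∃ t, 1 ≤ t ∧ t ≤ r ∧ ι' t = m) ↔ ¬ ∃ t, 1 ≤ t ∧ t ≤ r ∧ ι t = m) := by
    intro m h1 h2
    have h := hcomp m h1 h2
    constructor
    · intro h' hA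
      exact h.mp hA h'
    · intro hA
      by_contra h'
      exact hA (h.mpr h')
  constructor
  · intro h t s ht1 htr hs1 hsr
    have hk := key hι' hι hcomp' hs1 hsr ht1 htr
    have h' := h s t hs1 hsr ht1 htr
    exact ⟨fun hle => h'.2 (by omega), fun hlt => h'.1 (by omega)⟩
  · intro h t s ht1 htr hs1 hsr
    have hk := key hι hι' hcomp hs1 hsr ht1 htr
    have h' := h s t hs1 hsr ht1 htr
    exact ⟨fun hle => h'.2 (by omega), fun hlt => h'.1 (by omega)⟩
end

section
/- Suppose r ≥ 2 and P contains a chain of length one (two comparable distinct elements). Then the relation ⪯_ι on P_r is reflexive if and only if ι(t) ∈ {2t − 1, 2t} for every t ∈ [r]. -/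
/-- For r ≥ 2 and P containing a chain of length one, ⪯_ι is reflexive
iff ι t ∈ {2t−1, 2t} for all t ∈ [r]. -/
theorem reflexive_iff {P : Type*} [PartialOrder P] (r : ℕ) (hr : 2 ≤ r)
    (p q : P) (hpq : p < q)
    (ι : ℕ → ℕ) (hι : StrictIncTo r ι) (h1 : ι 1 = 1) :
    (∀ x : ℕ → P, IsMultichain r x → MRel r ι x x) ↔
    (∀ t, 1 ≤ t → t ≤ r → ι t = 2 * t - 1 ∨ ι t = 2 * t) := by
  constructor
  · intro hrefl t ht1 htr
    have key : ∀ k : ℕ, IsMultichain r (fun i => if i ≤ k then p else q) := by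
      intro k i j _ hij _
      dsimp only
      by_cases hi : i ≤ k <;> by_cases hj : j ≤ k
      · simp [hi, hj]
      · simp only [hi, hj, if_true, if_false]; exact hpq.le
      · exact absurd (hij.trans hj) hi
      · simp [hi, hj]
    have Hlo : 2 * t - 1 ≤ ι t := by
      rcases eq_or_lt_of_le ht1 with h1t | h1t
      · subst h1t; omega
      · by_contra hlt
        push_neg at hlt
        have := (hrefl _ (key (t - 1)) t (t - 1) ht1 htr (by omega) (by omega)).2
          (by omega)
        simp only [show ¬ t ≤ t - 1 by omega, le_refl, if_true, if_false] at this
        exact hpq.not_ge this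
    have Hhi : ι t ≤ 2 * t := by
      rcases eq_or_lt_of_le htr with htr' | htr'
      · have := (hι.1 t ht1 htr).2
        omega
      · by_contra h
        push_neg at h
        have := (hrefl _ (key t) t (t + 1) ht1 htr (by omega) (by omega)).1
          (by omega)
        simp only [show ¬ t + 1 ≤ t by omega, le_refl, if_true, if_false] at this
        exact hpq.not_ge this
    omega
  · intro h x hx t s ht1 htr hs1 hsr
    refine ⟨fun hle => ?_, fun hlt => ?_⟩
    · rcases h t ht1 htr with h' | h' <;> exact hx s t hs1 (by omega) htr
    · rcases h t ht1 htr with h' | h' <;> exact hx t s ht1 (by omega) hsr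
end

section
/- For the map ι defined by ι(1) = 1 and, for 2 ≤ t ≤ r, ι(t) = 2t if t is even and ι(t) = 2t − 1 if t is odd, the relation ⪯_ι is a partial order on P_r (reflexive, antisymmetric, and transitive). -/
/-- The zig-zag map: `ι t = 2t` for even `t`, `ι t = 2t − 1` for odd `t` (so `ι 1 = 1`). -/
def zig : ℕ → ℕ := fun t => if t % 2 = 0 then 2 * t else 2 * t - 1

/-- For the zig-zag map, ⪯_ι is a partial order on P_r:
reflexive, antisymmetric and transitive. -/
theorem zigzag_partial_order {P : Type*} [PartialOrder P] (r : ℕ) (hr : 1 ≤ r) :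
    (∀ p : ℕ → P, IsMultichain r p → MRel r zig p p) ∧
    (∀ p q : ℕ → P, IsMultichain r p → IsMultichain r q →
      MRel r zig p q → MRel r zig q p → ∀ i, 1 ≤ i → i ≤ r → p i = q i) ∧
    (∀ p q s : ℕ → P, IsMultichain r p → IsMultichain r q → IsMultichain r s →
      MRel r zig p q → MRel r zig q s → MRel r zig p s) := by
  refine ⟨?_, ?_, ?_⟩
  · -- reflexivity
    intro p hp t u ht htr hu hur
    constructor
    · intro h
      simp only [zig] at h
      apply hp u t hu ?_ htr
      split at h <;> omega
    · intro h
      simp only [zig] at h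
      apply hp t u ht ?_ hur
      split at h <;> omega
  · -- antisymmetry
    intro p q hp hq hpq hqp i hi hir
    have h1 := hpq i i hi hir hi hir
    have h2 := hqp i i hi hir hi hir
    by_cases hpar : i % 2 = 0
    · exact le_antisymm (h2.1 (by simp only [zig, if_pos hpar]; omega))
        (h1.1 (by simp only [zig, if_pos hpar]; omega))
    · exact le_antisymm (h1.2 (by simp only [zig, if_neg hpar]; omega))
        (h2.2 (by simp only [zig, if_neg hpar]; omega))
  · -- transitivity
    intro p q s hp hq hs hpq hqs t u ht htr hu hur
    constructor
    · intro h
      by_cases hpt : t % 2 = 0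
      · -- t even: u ≤ t
        simp only [zig, if_pos hpt] at h
        calc s u ≤ q t := (hqs t u ht htr hu hur).1
              (by simp only [zig, if_pos hpt]; omega)
          _ ≤ p t := (hpq t t ht htr ht htr).1
              (by simp only [zig, if_pos hpt]; omega)
      · -- t odd: u < t
        simp only [zig, if_neg hpt] at h
        by_cases hpu : u % 2 = 0
        · calc s u ≤ q u := (hqs u u hu hur hu hur).1
                (by simp only [zig, if_pos hpu]; omega)
            _ ≤ p t := (hpq t u ht htr hu hur).1
                (by simp only [zig, if_neg hpt]; omega)
        · -- u odd: use m = u + 1 (even, and u + 1 < t)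
          have h1 : 1 ≤ u + 1 := by omega
          have hm : u + 1 ≤ r := by omega
          calc s u ≤ q (u + 1) := (hqs (u + 1) u h1 hm hu hur).1
                (by simp only [zig]; split <;> omega)
            _ ≤ p t := (hpq t (u + 1) ht htr h1 hm).1
                (by simp only [zig, if_neg hpt]; omega)
    · intro h
      by_cases hpt : t % 2 = 0
      · -- t even: u > t
        simp only [zig, if_pos hpt] at h
        by_cases hpu : u % 2 = 0
        · -- u even: use m = u - 1 (odd, t < u - 1)
          have h1 : 1 ≤ u - 1 := by omega
          have hm : u - 1 ≤ r := by omega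
          calc p t ≤ q (u - 1) := (hpq t (u - 1) ht htr h1 hm).2
                (by simp only [zig, if_pos hpt]; omega)
            _ ≤ s u := (hqs (u - 1) u h1 hm hu hur).2
                (by simp only [zig]; split <;> omega)
        · calc p t ≤ q u := (hpq t u ht htr hu hur).2
                (by simp only [zig, if_pos hpt]; omega)
            _ ≤ s u := (hqs u u hu hur hu hur).2
                (by simp only [zig, if_neg hpu]; omega)
      · -- t odd: u ≥ t
        simp only [zig, if_neg hpt] at h
        by_cases hpu : u % 2 = 0
        · -- u even: u ≥ t + 1, use m = u - 1 (odd, u - 1 ≥ t)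
          have h1 : 1 ≤ u - 1 := by omega
          have hm : u - 1 ≤ r := by omega
          calc p t ≤ q (u - 1) := (hpq t (u - 1) ht htr h1 hm).2
                (by simp only [zig, if_neg hpt]; omega)
            _ ≤ s u := (hqs (u - 1) u h1 hm hu hur).2
                (by simp only [zig]; split <;> omega)
        · calc p t ≤ q u := (hpq t u ht htr hu hur).2
                (by simp only [zig, if_neg hpt]; omega)
            _ ≤ s u := (hqs u u hu hur hu hur).2
                (by simp only [zig, if_neg hpu]; omega)
end

section
/- If every chain in P has length at most 1 (i.e., P contains no 3-element chain), then for all ι, ȷ ∈ 𝓘 the comparability graphs agree: for all 𝔭, 𝔮 ∈ P_r, (𝔭 ⪯_ι 𝔮 or 𝔮 ⪯_ι 𝔭) if and only if (𝔭 ⪯_ȷ 𝔮 or 𝔮 ⪯_ȷ 𝔭). -/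
/-- Membership in the family `𝓘`: `ι 1 = 1` and `ι t ∈ {2t−1, 2t}` for `t ∈ [r]`. -/
def InI (r : ℕ) (ι : ℕ → ℕ) : Prop :=
  ι 1 = 1 ∧ ∀ t, 1 ≤ t → t ≤ r → ι t = 2 * t - 1 ∨ ι t = 2 * t

section Aux

variable {P : Type*} [PartialOrder P]

/-- Build `MRel r κ p q` from the "core" off-diagonal inequalities plus the
diagonal inequalities dictated by the pattern of `κ`. -/
lemma mrel_build {r : ℕ} {κ : ℕ → ℕ} (hκ : InI r κ) {p q : ℕ → P}
    (c1 : ∀ s t, 1 ≤ s → s < t → t ≤ r → q s ≤ p t)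
    (c2 : ∀ t s, 1 ≤ t → t < s → s ≤ r → p t ≤ q s)
    (d1 : ∀ t, 1 ≤ t → t ≤ r → κ t = 2 * t → q t ≤ p t)
    (d2 : ∀ t, 1 ≤ t → t ≤ r → κ t = 2 * t - 1 → p t ≤ q t) :
    MRel r κ p q := by
  intro t s ht1 htr hs1 hsr
  rcases hκ.2 t ht1 htr with hk | hk
  · constructor
    · intro hle
      have hst : s < t := by omega
      exact c1 s t hs1 hst htr
    · intro hlt
      rcases Nat.lt_or_ge t s with h | h
      · exact c2 t s ht1 h hsr
      · have hst : s = t := by omega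
        rw [hst]; exact d2 t ht1 htr hk
  · constructor
    · intro hle
      rcases Nat.lt_or_ge s t with h | h
      · exact c1 s t hs1 h htr
      · have hst : s = t := by omega
        rw [hst]; exact d1 t ht1 htr hk
    · intro hlt
      have hts : t < s := by omega
      exact c2 t s ht1 hts hsr

/-- Main lemma: one `MRel ι p q` yields comparability for any other `κ ∈ 𝓘`. -/
lemma mrel_transfer (h3 : ¬ ∃ x y z : P, x < y ∧ y < z) {r : ℕ}
    {ι κ : ℕ → ℕ} (hι : InI r ι) (hκ : InI r κ)
    {p q : ℕ → P} (hp : IsMultichain r p) (hq : IsMultichain r q)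
    (h : MRel r ι p q) : MRel r κ p q ∨ MRel r κ q p := by
  -- core inequalities, independent of ι
  have c1 : ∀ s t, 1 ≤ s → s < t → t ≤ r → q s ≤ p t := by
    intro s t hs hst htr
    refine (h t s (by omega) htr hs (by omega)).1 ?_
    rcases hι.2 t (by omega) htr with hk | hk <;> omega
  have c2 : ∀ t s, 1 ≤ t → t < s → s ≤ r → p t ≤ q s := by
    intro t s ht hts hsr
    refine (h t s ht (by omega) (by omega) hsr).2 ?_
    rcases hι.2 t ht (by omega) with hk | hk <;> omega
  -- diagonal comparability
  have diag : ∀ t, 1 ≤ t → t ≤ r → p t ≤ q t ∨ q t ≤ p t := by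
    intro t ht htr
    rcases hι.2 t ht htr with hk | hk
    · exact Or.inl ((h t t ht htr ht htr).2 (by omega))
    · exact Or.inr ((h t t ht htr ht htr).1 (by omega))
  -- no two indices can carry strict diagonal inequalities (any directions)
  have mixed : ∀ t t', 1 ≤ t → t ≤ r → 1 ≤ t' → t' ≤ r →
      p t < q t → q t' < p t' → False := by
    intro t t' ht htr ht' ht'r h1 h2
    rcases lt_trichotomy t t' with hlt | heq | hgt
    · exact h3 ⟨p t, q t', p t', lt_of_lt_of_le h1 (hq t t' ht (le_of_lt hlt) ht'r), h2⟩
    · subst heq; exact absurd (h1.trans h2) (lt_irrefl _)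
    · exact h3 ⟨q t', p t, q t, lt_of_lt_of_le h2 (hp t' t ht' (le_of_lt hgt) htr), h1⟩
  have same1 : ∀ t t', 1 ≤ t → t ≤ r → 1 ≤ t' → t' ≤ r → t ≠ t' →
      p t < q t → p t' < q t' → False := by
    intro t t' ht htr ht' ht'r hne h1 h2
    rcases lt_or_gt_of_ne hne with hlt | hgt
    · exact h3 ⟨p t, p t', q t', lt_of_lt_of_le h1 (c1 t t' ht hlt ht'r), h2⟩
    · exact h3 ⟨p t', p t, q t, lt_of_lt_of_le h2 (c1 t' t ht' hgt htr), h1⟩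
  have same2 : ∀ t t', 1 ≤ t → t ≤ r → 1 ≤ t' → t' ≤ r → t ≠ t' →
      q t < p t → q t' < p t' → False := by
    intro t t' ht htr ht' ht'r hne h1 h2
    rcases lt_or_gt_of_ne hne with hlt | hgt
    · exact h3 ⟨q t, q t', p t', lt_of_lt_of_le h1 (c2 t t' ht hlt ht'r), h2⟩
    · exact h3 ⟨q t', q t, p t, lt_of_lt_of_le h2 (c2 t' t ht' hgt htr), h1⟩
  by_cases hall : ∀ t, 1 ≤ t → t ≤ r → p t = q t
  · left
    refine mrel_build hκ c1 c2 ?_ ?_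
    · intro t ht htr _; exact le_of_eq (hall t ht htr).symm
    · intro t ht htr _; exact le_of_eq (hall t ht htr)
  · push_neg at hall
    obtain ⟨t₀, ht₀, ht₀r, hne₀⟩ := hall
    -- all other diagonal entries are equal
    have heq : ∀ t, 1 ≤ t → t ≤ r → t ≠ t₀ → p t = q t := by
      intro t ht htr htne
      by_contra hne
      rcases diag t ht htr with hle | hle
      · have h1 : p t < q t := lt_of_le_of_ne hle hne
        rcases diag t₀ ht₀ ht₀r with hle₀ | hle₀
        · exact same1 t t₀ ht htr ht₀ ht₀r htne h1 (lt_of_le_of_ne hle₀ hne₀)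
        · exact mixed t t₀ ht htr ht₀ ht₀r h1 (lt_of_le_of_ne hle₀ (Ne.symm hne₀))
      · have h1 : q t < p t := lt_of_le_of_ne hle (fun e => hne e.symm)
        rcases diag t₀ ht₀ ht₀r with hle₀ | hle₀
        · exact mixed t₀ t ht₀ ht₀r ht htr (lt_of_le_of_ne hle₀ hne₀) h1
        · exact same2 t t₀ ht htr ht₀ ht₀r htne h1 (lt_of_le_of_ne hle₀ (Ne.symm hne₀))
    rcases diag t₀ ht₀ ht₀r with hle₀ | hle₀
    · -- p t₀ < q t₀ (strict since hne₀)
      rcases hκ.2 t₀ ht₀ ht₀r with hk₀ | hk₀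
      · -- κ t₀ = 2 t₀ - 1 : use MRel κ p q
        left
        refine mrel_build hκ c1 c2 ?_ ?_
        · intro t ht htr hk
          by_cases hteq : t = t₀
          · subst hteq; omega
          · exact le_of_eq (heq t ht htr hteq).symm
        · intro t ht htr _
          by_cases hteq : t = t₀
          · subst hteq; exact hle₀
          · exact le_of_eq (heq t ht htr hteq)
      · -- κ t₀ = 2 t₀ : use MRel κ q p
        right
        refine mrel_build hκ (fun s t hs hst htr => c2 s t hs hst htr)
          (fun t s ht hts hsr => c1 t s ht hts hsr) ?_ ?_
        · intro t ht htr hk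
          by_cases hteq : t = t₀
          · subst hteq; exact hle₀
          · exact le_of_eq (heq t ht htr hteq)
        · intro t ht htr hk
          by_cases hteq : t = t₀
          · subst hteq; omega
          · exact le_of_eq (heq t ht htr hteq).symm
    · -- q t₀ < p t₀
      rcases hκ.2 t₀ ht₀ ht₀r with hk₀ | hk₀
      · -- κ t₀ = 2 t₀ - 1 : use MRel κ q p
        right
        refine mrel_build hκ (fun s t hs hst htr => c2 s t hs hst htr)
          (fun t s ht hts hsr => c1 t s ht hts hsr) ?_ ?_
        · intro t ht htr hk
          by_cases hteq : t = t₀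
          · subst hteq; omega
          · exact le_of_eq (heq t ht htr hteq)
        · intro t ht htr _
          by_cases hteq : t = t₀
          · subst hteq; exact hle₀
          · exact le_of_eq (heq t ht htr hteq).symm
      · -- κ t₀ = 2 t₀ : use MRel κ p q
        left
        refine mrel_build hκ c1 c2 ?_ ?_
        · intro t ht htr _
          by_cases hteq : t = t₀
          · subst hteq; exact hle₀
          · exact le_of_eq (heq t ht htr hteq).symm
        · intro t ht htr hk
          by_cases hteq : t = t₀
          · subst hteq; omega
          · exact le_of_eq (heq t ht htr hteq)

end Aux

/-- If P has no 3-element chain, then for all ι, κ ∈ 𝓘 the comparability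
graphs of ⪯_ι and ⪯_κ on P_r agree. -/
theorem graphs_agree_short_chains {P : Type*} [PartialOrder P]
    (h3 : ¬ ∃ x y z : P, x < y ∧ y < z) (r : ℕ)
    (ι κ : ℕ → ℕ) (hι : InI r ι) (hκ : InI r κ)
    (p q : ℕ → P) (hp : IsMultichain r p) (hq : IsMultichain r q) :
    (MRel r ι p q ∨ MRel r ι q p) ↔ (MRel r κ p q ∨ MRel r κ q p) := by
  constructor
  · rintro (h | h)
    · exact mrel_transfer h3 hι hκ hp hq h
    · exact (mrel_transfer h3 hι hκ hq hp h).symm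
  · rintro (h | h)
    · exact mrel_transfer h3 hκ hι hp hq h
    · exact (mrel_transfer h3 hκ hι hq hp h).symm
end

section
/- If P contains a chain p < q < s of three elements, then for distinct ι, ȷ ∈ 𝓘 the comparability graphs of ⪯_ι and ⪯_ȷ on P_r differ: there exist 𝔭 ≠ 𝔮 in P_r with 𝔭 ⪯_ι 𝔮 but neither 𝔭 ⪯_ȷ 𝔮 nor 𝔮 ⪯_ȷ 𝔭. -/
/-- If P contains a 3-element chain, then distinct ι, κ ∈ 𝓘 give different
comparability graphs on P_r. -/
theorem graphs_differ {P : Type*} [PartialOrder P] (r : ℕ) (hr : 1 ≤ r)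
    (x y z : P) (h1 : x < y) (h2 : y < z)
    (ι κ : ℕ → ℕ) (hι : InI r ι) (hκ : InI r κ)
    (hne : ∃ k, 1 ≤ k ∧ k ≤ r ∧ ι k ≠ κ k) :
    ∃ p q : ℕ → P, IsMultichain r p ∧ IsMultichain r q ∧
      (∃ k, 1 ≤ k ∧ k ≤ r ∧ p k ≠ q k) ∧
      MRel r ι p q ∧ ¬ MRel r κ p q ∧ ¬ MRel r κ q p := by
  obtain ⟨hι1, hι2⟩ := hι
  obtain ⟨hκ1, hκ1'⟩ := hκ
  obtain ⟨k, hk1, hkr, hkne⟩ := hne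
  have hk2 : k ≠ 1 := by
    intro h; subst h; exact hkne (hι1.trans hκ1.symm)
  rcases hι2 k hk1 hkr with hik | hik
  · -- Case B: ι k = 2k - 1, κ k = 2k
    have hκk : κ k = 2 * k := by
      rcases hκ1' k hk1 hkr with h | h
      · exact absurd (hik.trans h.symm) hkne
      · exact h
    refine ⟨(fun t => if t = 1 then x else if t ≤ k then y else z),
      (fun s => if s < k then y else z), ?_, ?_, ⟨k, hk1, hkr, ?_⟩, ?_, ?_, ?_⟩
    · intro i j hi hij hjr
      (dsimp only; split_ifs) <;>
        first
          | exact le_refl _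
          | exact h1.le
          | exact h2.le
          | exact (h1.trans h2).le
          | (exfalso; omega)
    · intro i j hi hij hjr
      (dsimp only; split_ifs) <;>
        first
          | exact le_refl _
          | exact h1.le
          | exact h2.le
          | exact (h1.trans h2).le
          | (exfalso; omega)
    · -- p k = y, q k = z
      simp only [if_neg hk2, le_refl, if_pos, lt_irrefl, if_neg]
      exact fun h => absurd h (h2.ne)
    · -- MRel ι p q
      intro t s ht1 htr hs1 hsr
      constructor
      · intro h
        rcases eq_or_ne t 1 with rfl | ht'
        · exfalso; omega
        rcases eq_or_ne t k with rfl | htk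
        · (dsimp only; split_ifs) <;>
            first
              | exact le_refl _
              | exact h1.le
              | exact h2.le
              | exact (h1.trans h2).le
              | (exfalso; omega)
        · rcases hι2 t ht1 htr with h' | h' <;>
            ((dsimp only; split_ifs) <;>
              first
                | exact le_refl _
                | exact h1.le
                | exact h2.le
                | exact (h1.trans h2).le
                | (exfalso; omega))
      · intro h
        rcases eq_or_ne t 1 with rfl | ht'
        · (dsimp only; split_ifs) <;>
            first
              | exact le_refl _
              | exact h1.le
              | exact h2.le
              | exact (h1.trans h2).le
              | (exfalso; omega)
        rcases eq_or_ne t k with rfl | htk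
        · (dsimp only; split_ifs) <;>
            first
              | exact le_refl _
              | exact h1.le
              | exact h2.le
              | exact (h1.trans h2).le
              | (exfalso; omega)
        · rcases hι2 t ht1 htr with h' | h' <;>
            ((dsimp only; split_ifs) <;>
              first
                | exact le_refl _
                | exact h1.le
                | exact h2.le
                | exact (h1.trans h2).le
                | (exfalso; omega))
    · -- ¬ MRel κ p q : at (k,k), κ k = 2k ≥ k+k forces q k ≤ p k, i.e. z ≤ y
      intro hm
      have := (hm k k hk1 hkr hk1 hkr).1 (by omega)
      dsimp only at this; rw [if_neg (lt_irrefl k), if_neg hk2, if_pos (le_refl k)] at this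
      exact absurd this h2.not_ge
    · -- ¬ MRel κ q p : at (1,1), κ 1 = 1 < 2 forces q 1 ≤ p 1, i.e. y ≤ x
      intro hm
      have := (hm 1 1 le_rfl hr le_rfl hr).2 (by omega)
      dsimp only at this; rw [if_pos rfl, if_pos (by omega : 1 < k)] at this
      exact absurd this h1.not_ge
  · -- Case A: ι k = 2k, κ k = 2k - 1
    have hκk : κ k = 2 * k - 1 := by
      rcases hκ1' k hk1 hkr with h | h
      · exact h
      · exact absurd (hik.trans h.symm) hkne
    refine ⟨(fun t => if t = 1 then x else if t < k then y else z),
      (fun s => if s ≤ k then y else z), ?_, ?_, ⟨k, hk1, hkr, ?_⟩, ?_, ?_, ?_⟩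
    · intro i j hi hij hjr
      (dsimp only; split_ifs) <;>
        first
          | exact le_refl _
          | exact h1.le
          | exact h2.le
          | exact (h1.trans h2).le
          | (exfalso; omega)
    · intro i j hi hij hjr
      (dsimp only; split_ifs) <;>
        first
          | exact le_refl _
          | exact h1.le
          | exact h2.le
          | exact (h1.trans h2).le
          | (exfalso; omega)
    · -- p k = z, q k = y
      simp only [if_neg hk2, lt_irrefl, if_neg, le_refl, if_pos]
      exact fun h => absurd h.symm (h2.ne)
    · -- MRel ι p q
      intro t s ht1 htr hs1 hsr
      constructor
      · intro h
        rcases eq_or_ne t 1 with rfl | ht'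
        · exfalso; omega
        rcases eq_or_ne t k with rfl | htk
        · (dsimp only; split_ifs) <;>
            first
              | exact le_refl _
              | exact h1.le
              | exact h2.le
              | exact (h1.trans h2).le
              | (exfalso; omega)
        · rcases hι2 t ht1 htr with h' | h' <;>
            ((dsimp only; split_ifs) <;>
              first
                | exact le_refl _
                | exact h1.le
                | exact h2.le
                | exact (h1.trans h2).le
                | (exfalso; omega))
      · intro h
        rcases eq_or_ne t 1 with rfl | ht'
        · (dsimp only; split_ifs) <;>
            first
              | exact le_refl _
              | exact h1.le
              | exact h2.le
              | exact (h1.trans h2).le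
              | (exfalso; omega)
        rcases eq_or_ne t k with rfl | htk
        · (dsimp only; split_ifs) <;>
            first
              | exact le_refl _
              | exact h1.le
              | exact h2.le
              | exact (h1.trans h2).le
              | (exfalso; omega)
        · rcases hι2 t ht1 htr with h' | h' <;>
            ((dsimp only; split_ifs) <;>
              first
                | exact le_refl _
                | exact h1.le
                | exact h2.le
                | exact (h1.trans h2).le
                | (exfalso; omega))
    · -- ¬ MRel κ p q : at (k,k), κ k = 2k-1 < k+k forces p k ≤ q k, i.e. z ≤ y
      intro hm
      have := (hm k k hk1 hkr hk1 hkr).2 (by omega)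
      dsimp only at this; rw [if_neg hk2, if_neg (lt_irrefl k), if_pos (le_refl k)] at this
      exact absurd this h2.not_ge
    · -- ¬ MRel κ q p : at (1,1), κ 1 = 1 < 2 forces q 1 ≤ p 1, i.e. y ≤ x
      intro hm
      have := (hm 1 1 le_rfl hr le_rfl hr).2 (by omega)
      dsimp only at this; rw [if_pos rfl, if_pos hk1] at this
      exact absurd this h1.not_ge
end

section
/- Let 𝔭 ≠ 𝔮 in P_r and suppose there is exactly one k ∈ [r] with p_k ≠ q_k, say p_k < q_k. Then for every ι ∈ 𝓘: if ι(k) = 2k − 1 then 𝔭 ⪯_ι 𝔮, and if ι(k) = 2k then 𝔮 ⪯_ι 𝔭. -/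
/-- If 𝔭 and 𝔮 differ exactly at one index k with p k < q k, then for each
ι ∈ 𝓘: ι k = 2k−1 gives 𝔭 ⪯_ι 𝔮 and ι k = 2k gives 𝔮 ⪯_ι 𝔭. -/
theorem single_difference_edge {P : Type*} [PartialOrder P] (r : ℕ)
    (ι : ℕ → ℕ) (hι : InI r ι)
    (p q : ℕ → P) (hp : IsMultichain r p) (hq : IsMultichain r q)
    (k : ℕ) (hk1 : 1 ≤ k) (hkr : k ≤ r) (hlt : p k < q k)
    (heq : ∀ j, 1 ≤ j → j ≤ r → j ≠ k → p j = q j) :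
    (ι k = 2 * k - 1 → MRel r ι p q) ∧ (ι k = 2 * k → MRel r ι q p) := by
  have hpleq : ∀ j, 1 ≤ j → j ≤ r → p j ≤ q j := by
    intro j h1 h2
    by_cases hj : j = k
    · subst hj; exact hlt.le
    · exact (heq j h1 h2 hj).le
  have hpq : ∀ i j, 1 ≤ i → i ≤ j → j ≤ r → p i ≤ q j := fun i j h1 h2 h3 =>
    (hp i j h1 h2 h3).trans (hpleq j (h1.trans h2) h3)
  have hqp : ∀ i j, 1 ≤ i → i ≤ j → j ≤ r → (i = k → j ≠ k) → q i ≤ p j := by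
    intro i j h1 h2 h3 h4
    by_cases hi : i = k
    · subst hi
      have hij : i < j := lt_of_le_of_ne h2 (fun h => h4 rfl h.symm)
      have := hq i j h1 h2 h3
      rw [heq j (h1.trans h2) h3 (h4 rfl)] at *
      exact this
    · rw [← heq i h1 (h2.trans h3) hi]; exact hp i j h1 h2 h3
  constructor
  · intro hk
    intro t s ht1 htr hs1 hsr
    rcases hι.2 t ht1 htr with hit | hit
    · constructor
      · intro h
        have hst : s < t := by omega
        exact hqp s t hs1 hst.le htr (fun _ => by omega)
      · intro h
        have hts : t ≤ s := by omega
        exact hpq t s ht1 hts hsr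
    · have htk : t ≠ k := by rintro rfl; omega
      constructor
      · intro h
        have hst : s ≤ t := by omega
        exact hqp s t hs1 hst htr (fun _ => htk)
      · intro h
        have hts : t < s := by omega
        exact hpq t s ht1 hts.le hsr
  · intro hk
    intro t s ht1 htr hs1 hsr
    rcases hι.2 t ht1 htr with hit | hit
    · have htk : t ≠ k := by rintro rfl; omega
      constructor
      · intro h
        exact hpq s t hs1 (by omega) htr
      · intro h
        exact hqp t s ht1 (by omega) hsr (fun h' => absurd h' htk)
    · constructor
      · intro h
        exact hpq s t hs1 (by omega) htr
      · intro h
        have hts : t < s := by omega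
        exact hqp t s ht1 hts.le hsr (fun _ => by omega)
end
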